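/- Let {D_α}_{α ∈ Λ} be a family of small categories with coproduct category D = Σ_{α ∈ Λ} D_α and inclusion functors m_α : D_α ⥤ D. Let K be a small category, r : D ⥤ K a functor, M a category with all small colimits, and T : D ⥤ M a functor. Then the left Kan extension of T along r decomposes as a coproduct in the functor category K ⥤ M: Lan_r(T) ≅ ∐_{α ∈ Λ} Lan_{m_α ⋙ r}(m_α ⋙ T). -/

import Mathlib

open CategoryTheory CategoryTheory.Limits

section Aux

variable {Λ : Type} {D : Λ → Type} [∀ α, SmallCategory (D α)]
    {K : Type} [SmallCategory K] (r : (Σ α, D α) ⥤ K)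
    {M : Type*} [Category M] [HasColimitsOfSize.{0, 0} M] (T : (Σ α, D α) ⥤ M)

/-- The coproduct of the componentwise left Kan extensions. -/
noncomputable def sigmaLan : K ⥤ M :=
  ∐ fun α : Λ => (Sigma.incl α ⋙ r).leftKanExtension (Sigma.incl α ⋙ T)

/-- The unit `T ⟶ r ⋙ sigmaLan r T`. -/
noncomputable def sigmaLanUnit : T ⟶ r ⋙ sigmaLan r T :=
  Sigma.natTrans fun α =>
    (Sigma.incl α ⋙ r).leftKanExtensionUnit (Sigma.incl α ⋙ T) ≫
      Functor.whiskerLeft (Sigma.incl α ⋙ r)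
        (Limits.Sigma.ι (fun α : Λ =>
          (Sigma.incl α ⋙ r).leftKanExtension (Sigma.incl α ⋙ T)) α)

instance sigmaLan_isLeftKanExtension :
    (sigmaLan r T).IsLeftKanExtension (sigmaLanUnit r T) := by
  constructor
  constructor
  refine IsInitial.ofUniqueHom (fun Y => StructuredArrow.homMk
    (Limits.Sigma.desc fun α =>
      ((Sigma.incl α ⋙ r).leftKanExtension (Sigma.incl α ⋙ T)).descOfIsLeftKanExtension
        ((Sigma.incl α ⋙ r).leftKanExtensionUnit (Sigma.incl α ⋙ T)) Y.right
        (Functor.whiskerLeft (Sigma.incl α) Y.hom)) ?_) ?_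
  · ext ⟨α, X⟩
    dsimp only [Functor.LeftExtension.mk, Functor.whiskeringLeft_obj_obj, Functor.whiskeringLeft_obj_map]
    rw [StructuredArrow.mk_hom_eq_self]
    simp only [NatTrans.comp_app, Functor.whiskerLeft_app, Functor.comp_obj, Sigma.incl_obj,
      sigmaLanUnit, Sigma.natTrans_app, Category.assoc]
    have h := NatTrans.congr_app (Sigma.ι_desc (fun α =>
      ((Sigma.incl α ⋙ r).leftKanExtension (Sigma.incl α ⋙ T)).descOfIsLeftKanExtension
        ((Sigma.incl α ⋙ r).leftKanExtensionUnit (Sigma.incl α ⋙ T)) Y.right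
        (Functor.whiskerLeft (Sigma.incl α) Y.hom)) α) (r.obj ⟨α, X⟩)
    simp only [NatTrans.comp_app] at h
    refine (Category.assoc _ _ _).trans ?_
    refine (congrArg (((Sigma.incl α ⋙ r).leftKanExtensionUnit (Sigma.incl α ⋙ T)).app X ≫ ·) h).trans ?_
    exact Functor.descOfIsLeftKanExtension_fac_app _ _ _ _ X
  · intro Y m
    ext1
    apply Limits.Sigma.hom_ext
    intro α
    refine Eq.trans ?_ (Sigma.ι_desc (fun α =>
      ((Sigma.incl α ⋙ r).leftKanExtension (Sigma.incl α ⋙ T)).descOfIsLeftKanExtension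
        ((Sigma.incl α ⋙ r).leftKanExtensionUnit (Sigma.incl α ⋙ T)) Y.right
        (Functor.whiskerLeft (Sigma.incl α) Y.hom)) α).symm
    apply Functor.hom_ext_of_isLeftKanExtension _
      ((Sigma.incl α ⋙ r).leftKanExtensionUnit (Sigma.incl α ⋙ T))
    ext X
    have this := congrArg (fun (t : T ⟶ r ⋙ Y.right) => t.app ⟨α, X⟩) (StructuredArrow.w m)
    simp only [Functor.LeftExtension.mk, StructuredArrow.mk_hom_eq_self, Functor.comp_obj,
      Functor.whiskeringLeft_obj_obj, NatTrans.comp_app, Functor.whiskeringLeft_obj_map, Functor.whiskerLeft_app,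
      sigmaLanUnit, sigmaLan, Sigma.natTrans_app, Sigma.incl_obj, Category.assoc] at this ⊢
    refine (Category.assoc _ _ _).symm.trans (this.trans ?_)
    exact (Functor.descOfIsLeftKanExtension_fac_app
      ((Sigma.incl α ⋙ r).leftKanExtension (Sigma.incl α ⋙ T))
      ((Sigma.incl α ⋙ r).leftKanExtensionUnit (Sigma.incl α ⋙ T)) Y.right
      (Functor.whiskerLeft (Sigma.incl α) Y.hom) X).symm

end Aux

/-- If a small category `D = Σ_{α ∈ Λ} D_α` is a disjoint union of small categories with
inclusions `m_α : D_α ⥤ D`, then for any functor `r : D ⥤ K` into a small category `K`,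
any cocomplete category `M` and any functor `T : D ⥤ M`, the left Kan extension of `T`
along `r` decomposes as the coproduct, in the functor category `K ⥤ M`, of the left Kan
extensions `Lan_{m_α ⋙ r} (m_α ⋙ T)`. -/
theorem stmt14 {Λ : Type} (D : Λ → Type) [∀ α, SmallCategory (D α)]
    {K : Type} [SmallCategory K] (r : (Σ α, D α) ⥤ K)
    {M : Type*} [Category M] [HasColimitsOfSize.{0, 0} M] (T : (Σ α, D α) ⥤ M) :
    Nonempty (r.leftKanExtension T ≅
      ∐ fun α : Λ => (Sigma.incl α ⋙ r).leftKanExtension (Sigma.incl α ⋙ T)) := by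
  exact ⟨Functor.leftKanExtensionUnique _ (r.leftKanExtensionUnit T) (sigmaLan r T) (sigmaLanUnit r T)⟩
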